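/- For non-negative integers k, l, j, m with j + l ≥ k, one has (1/(π·m!)) ∫_ℂ w^l · w̄^k · w^j · K_m(z,w) · |w|^{2m} · e^{-|w|²} dA(w) = ((j+l+m)!/(j+l-k+m)!) · z^{j+l-k}, where K_m(z,w) = Σ_{n≥0} (m!/(n+m)!)(z·w̄)^n. -/

import Mathlib

open MeasureTheory Complex

/-- The reproducing kernel of the Fock-Sobolev space `F^{2,m}(ℂ)`. -/
noncomputable def fockKernel (m : ℕ) (z w : ℂ) : ℂ :=
  ∑' n : ℕ, ((Nat.factorial m : ℂ) / (Nat.factorial (n + m))) * (z * (starRingEnd ℂ) w) ^ n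

open Real Set in
/-- The angular integral. -/
lemma angular_integral (n : ℤ) :
    ∫ θ in Set.Ioo (-π) π, Complex.exp (n * θ * I) =
      if n = 0 then ((2 * π : ℝ) : ℂ) else 0 := by
  have hle : (-π : ℝ) ≤ π := by linarith [Real.pi_pos]
  have h1 : ∫ θ in Set.Ioo (-π) π, Complex.exp (n * θ * I)
      = ∫ θ in (-π)..π, Complex.exp (n * θ * I) := by
    rw [intervalIntegral.integral_of_le hle, ← integral_Ioc_eq_integral_Ioo]
  rw [h1]
  by_cases hn : n = 0
  · subst hn
    simp only [Int.cast_zero, zero_mul, Complex.exp_zero, if_true]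
    rw [intervalIntegral.integral_const, Complex.real_smul]
    push_cast
    ring
  · rw [if_neg hn]
    have hc : ((n : ℂ) * I) ≠ 0 :=
      mul_ne_zero (by exact_mod_cast hn) Complex.I_ne_zero
    have : ∀ θ : ℝ, (n : ℂ) * θ * I = ((n : ℂ) * I) * θ := fun θ => by ring
    simp_rw [this]
    rw [integral_exp_mul_complex hc]
    have e1 : Complex.exp ((n : ℂ) * I * π) = (-1 : ℂ) ^ n := by
      rw [show (n : ℂ) * I * (π : ℂ) = (n : ℂ) * ((π : ℂ) * I) by ring,
        Complex.exp_int_mul, Complex.exp_pi_mul_I]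
    have e3 : ((-1 : ℂ) ^ n)⁻¹ = (-1 : ℂ) ^ n := by
      rcases Int.even_or_odd n with he | ho
      · rw [he.neg_one_zpow]; norm_num
      · rw [ho.neg_one_zpow]; norm_num
    have e2 : Complex.exp ((n : ℂ) * I * (-π : ℝ)) = (-1 : ℂ) ^ n := by
      push_cast
      rw [show (n : ℂ) * I * (-(π : ℂ)) = (n : ℂ) * (-((π : ℂ) * I)) by ring,
        Complex.exp_int_mul, Complex.exp_neg, Complex.exp_pi_mul_I, inv_zpow, e3]
    rw [e1, e2, sub_self, zero_div]

open Real Set in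
/-- The radial integral. -/
lemma radial_integral (c : ℕ) :
    ∫ r in Set.Ioi (0 : ℝ), r ^ (2 * c + 1) * Real.exp (-r ^ 2)
      = (Nat.factorial c : ℝ) / 2 := by
  have h : ∫ r in Set.Ioi (0 : ℝ), r ^ (2 * c + 1) * Real.exp (-r ^ 2)
      = ∫ r in Set.Ioi (0 : ℝ), r ^ ((2 * c + 1 : ℕ) : ℝ) * Real.exp (-r ^ (2 : ℝ)) := by
    refine setIntegral_congr_fun measurableSet_Ioi (fun x hx => ?_)
    rw [Real.rpow_natCast, Real.rpow_two]
  have hq : (-1 : ℝ) < ((2 * c + 1 : ℕ) : ℝ) := by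
    push_cast
    nlinarith [Nat.cast_nonneg (α := ℝ) c]
  rw [h, _root_.integral_rpow_mul_exp_neg_rpow (by norm_num) hq]
  have h2 : (((2 * c + 1 : ℕ) : ℝ) + 1) / 2 = (c : ℝ) + 1 := by push_cast; ring
  rw [h2, Real.Gamma_nat_eq_factorial]
  ring

open Real Set in
/-- Gaussian moments over ℂ. -/
lemma gaussian_moment (a b : ℕ) :
    ∫ w : ℂ, w ^ a * ((starRingEnd ℂ) w) ^ b * (Real.exp (-(‖w‖) ^ 2) : ℂ)
      = if a = b then ((π * (Nat.factorial a) : ℝ) : ℂ) else 0 := by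
  rw [← Complex.integral_comp_polarCoord_symm]
  have hsymm : ∀ p : ℝ × ℝ, Complex.polarCoord.symm p = (p.1 : ℂ) * Complex.exp (p.2 * I) := by
    intro p
    rw [Complex.polarCoord_symm_apply, Complex.exp_mul_I]
    simp [Complex.ofReal_cos, Complex.ofReal_sin]
  have key : ∫ p in polarCoord.target,
        p.1 • ((Complex.polarCoord.symm p) ^ a *
          ((starRingEnd ℂ) (Complex.polarCoord.symm p)) ^ b *
          (Real.exp (-(‖Complex.polarCoord.symm p‖) ^ 2) : ℂ))
      = ∫ p in Set.Ioi (0 : ℝ) ×ˢ Set.Ioo (-π) π,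
          (((p.1 ^ (a + b + 1) * Real.exp (-p.1 ^ 2) : ℝ)) : ℂ) *
            Complex.exp ((((a : ℤ) - (b : ℤ) : ℤ) : ℂ) * p.2 * I) := by
    rw [polarCoord_target]
    refine setIntegral_congr_fun (measurableSet_Ioi.prod measurableSet_Ioo) (fun p hp => ?_)
    obtain ⟨hr, hθ⟩ := hp
    rw [Set.mem_Ioi] at hr
    have habs : ‖Complex.polarCoord.symm p‖ = p.1 := by
      rw [Complex.norm_polarCoord_symm, abs_of_pos hr]
    rw [habs, hsymm]
    have hconj : (starRingEnd ℂ) ((p.1 : ℂ) * Complex.exp (p.2 * I))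
        = (p.1 : ℂ) * Complex.exp (-(p.2 * I)) := by
      rw [map_mul, Complex.conj_ofReal, ← Complex.exp_conj, map_mul, Complex.conj_ofReal,
        Complex.conj_I, mul_neg]
    rw [hconj, mul_pow, mul_pow, ← Complex.exp_nat_mul, ← Complex.exp_nat_mul,
      Complex.real_smul]
    have hexp : Complex.exp ((a : ℂ) * (p.2 * I)) * Complex.exp ((b : ℂ) * -(p.2 * I))
        = Complex.exp ((((a : ℤ) - (b : ℤ) : ℤ) : ℂ) * p.2 * I) := by
      rw [← Complex.exp_add]
      congr 1
      push_cast
      ring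
    rw [Complex.ofReal_mul, Complex.ofReal_pow]
    calc (p.1 : ℂ) * ((p.1 : ℂ) ^ a * Complex.exp ((a : ℂ) * (p.2 * I)) *
            ((p.1 : ℂ) ^ b * Complex.exp ((b : ℂ) * -(p.2 * I))) *
            (Real.exp (-p.1 ^ 2) : ℂ))
        = ((p.1 : ℂ) ^ (a + b) * (p.1 : ℂ) * (Real.exp (-p.1 ^ 2) : ℂ)) *
            (Complex.exp ((a : ℂ) * (p.2 * I)) * Complex.exp ((b : ℂ) * -(p.2 * I))) := by
          rw [pow_add]; ring
      _ = (p.1 : ℂ) ^ (a + b + 1) * (Real.exp (-p.1 ^ 2) : ℂ) *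
            Complex.exp ((((a : ℤ) - (b : ℤ) : ℤ) : ℂ) * p.2 * I) := by
          rw [hexp, pow_succ]; ring
  rw [key, MeasureTheory.Measure.volume_eq_prod,
    setIntegral_prod_mul (f := fun r : ℝ => ((r ^ (a + b + 1) * Real.exp (-r ^ 2) : ℝ) : ℂ))
      (g := fun θ : ℝ => Complex.exp ((((a : ℤ) - (b : ℤ) : ℤ) : ℂ) * θ * I)),
    angular_integral]
  rw [show (∫ x in Set.Ioi (0:ℝ), ((x ^ (a + b + 1) * Real.exp (-x ^ 2) : ℝ) : ℂ))
      = ((∫ x in Set.Ioi (0:ℝ), x ^ (a + b + 1) * Real.exp (-x ^ 2) : ℝ) : ℂ) from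
    integral_ofReal]
  by_cases hab : a = b
  · subst hab
    rw [if_pos (by omega), if_pos rfl]
    have h3 : a + a + 1 = 2 * a + 1 := by ring
    rw [h3, radial_integral]
    push_cast
    ring
  · rw [if_neg (by omega), if_neg hab, mul_zero]

lemma exp_tsum_div (x : ℝ) : ∑' n : ℕ, x ^ n / (Nat.factorial n : ℝ) = Real.exp x := by
  rw [Real.exp_eq_exp_ℝ, NormedSpace.exp_eq_tsum_div]

theorem stmt2 (k l j m : ℕ) (h : k ≤ j + l) (z : ℂ) :
    (1 / ((Real.pi : ℂ) * (Nat.factorial m : ℂ))) *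
      ∫ w : ℂ, w ^ l * ((starRingEnd ℂ) w) ^ k * w ^ j * fockKernel m z w *
        ((‖w‖ : ℂ)) ^ (2 * m) * (Real.exp (-(‖w‖) ^ 2) : ℂ)
    = ((Nat.factorial (j + l + m) : ℂ) / (Nat.factorial (j + l - k + m) : ℂ)) * z ^ (j + l - k) := by
  classical
  set L : ℕ := l + k + j + 2 * m with hL
  set F : ℕ → ℂ → ℂ := fun n w =>
    ((Nat.factorial m : ℂ) / (Nat.factorial (n + m) : ℂ)) * z ^ n *
      (w ^ (l + j + m) * ((starRingEnd ℂ) w) ^ (k + n + m) *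
        (Real.exp (-(‖w‖) ^ 2) : ℂ)) with hF
  set bound : ℕ → ℂ → ℝ := fun n w =>
    (‖w‖ ^ L * Real.exp (-(‖w‖) ^ 2)) *
      ((‖z‖ * ‖w‖) ^ n / (Nat.factorial n : ℝ)) with hbound
  have fact_le : ∀ n : ℕ, ((Nat.factorial m : ℝ) / (Nat.factorial (n + m) : ℝ))
      ≤ 1 / (Nat.factorial n : ℝ) := by
    intro n
    rw [div_le_div_iff₀ (by positivity) (by positivity), one_mul]
    exact_mod_cast Nat.le_of_dvd (Nat.factorial_pos _)
      (by simpa [mul_comm] using Nat.factorial_mul_factorial_dvd_factorial_add n m)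
  have habs2 : ∀ w : ℂ, ((‖w‖ : ℂ)) ^ (2 * m) =
      (w * (starRingEnd ℂ) w) ^ m := by
    intro w
    calc ((‖w‖ : ℂ)) ^ (2 * m) = (((‖w‖ : ℂ)) ^ 2) ^ m := by
          rw [← pow_mul]
      _ = ((Complex.normSq w : ℝ) : ℂ) ^ m := by
          rw [← Complex.ofReal_pow, Complex.sq_norm]
      _ = (w * (starRingEnd ℂ) w) ^ m := by rw [Complex.mul_conj]
  -- pointwise HasSum
  have h_lim : ∀ w : ℂ, HasSum (fun n => F n w)
      (w ^ l * ((starRingEnd ℂ) w) ^ k * w ^ j * fockKernel m z w *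
        ((‖w‖ : ℂ)) ^ (2 * m) * (Real.exp (-(‖w‖) ^ 2) : ℂ)) := by
    intro w
    have hsum : Summable (fun n : ℕ =>
        ((Nat.factorial m : ℂ) / (Nat.factorial (n + m) : ℂ)) * (z * (starRingEnd ℂ) w) ^ n) := by
      apply Summable.of_norm
      refine Summable.of_nonneg_of_le (fun n => norm_nonneg _) (fun n => ?_)
        (Real.summable_pow_div_factorial ‖z * (starRingEnd ℂ) w‖)
      have hn : ‖((Nat.factorial m : ℂ) / (Nat.factorial (n + m) : ℂ)) *
          (z * (starRingEnd ℂ) w) ^ n‖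
          = ((Nat.factorial m : ℝ) / (Nat.factorial (n + m) : ℝ)) *
            ‖z * (starRingEnd ℂ) w‖ ^ n := by
        rw [norm_mul, norm_pow, norm_div, Complex.norm_natCast, Complex.norm_natCast]
      rw [hn]
      calc ((Nat.factorial m : ℝ) / (Nat.factorial (n + m) : ℝ)) *
            ‖z * (starRingEnd ℂ) w‖ ^ n
          ≤ (1 / (Nat.factorial n : ℝ)) * ‖z * (starRingEnd ℂ) w‖ ^ n :=
            mul_le_mul_of_nonneg_right (fact_le n) (by positivity)
        _ = ‖z * (starRingEnd ℂ) w‖ ^ n / (Nat.factorial n : ℝ) := by ring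
    have hK : HasSum (fun n : ℕ =>
        ((Nat.factorial m : ℂ) / (Nat.factorial (n + m) : ℂ)) * (z * (starRingEnd ℂ) w) ^ n)
        (fockKernel m z w) := by
      rw [fockKernel]
      exact hsum.hasSum
    have hC := hK.mul_left (w ^ l * ((starRingEnd ℂ) w) ^ k * w ^ j *
        ((‖w‖ : ℂ)) ^ (2 * m) * (Real.exp (-(‖w‖) ^ 2) : ℂ))
    have heq : (fun n : ℕ => (w ^ l * ((starRingEnd ℂ) w) ^ k * w ^ j *
          ((‖w‖ : ℂ)) ^ (2 * m) * (Real.exp (-(‖w‖) ^ 2) : ℂ)) *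
          (((Nat.factorial m : ℂ) / (Nat.factorial (n + m) : ℂ)) * (z * (starRingEnd ℂ) w) ^ n))
        = fun n => F n w := by
      funext n
      rw [habs2 w, hF]
      simp only []
      rw [pow_add, pow_add, pow_add, pow_add, mul_pow, mul_pow]
      ring
    have hgoal : w ^ l * ((starRingEnd ℂ) w) ^ k * w ^ j * fockKernel m z w *
          ((‖w‖ : ℂ)) ^ (2 * m) * (Real.exp (-(‖w‖) ^ 2) : ℂ)
        = (w ^ l * ((starRingEnd ℂ) w) ^ k * w ^ j *
          ((‖w‖ : ℂ)) ^ (2 * m) * (Real.exp (-(‖w‖) ^ 2) : ℂ)) *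
          fockKernel m z w := by ring
    rw [hgoal]
    exact heq ▸ hC
  have h_meas : ∀ n : ℕ, AEStronglyMeasurable (F n) volume := by
    intro n
    refine Continuous.aestronglyMeasurable ?_
    have hE : Continuous fun w : ℂ => (Real.exp (-(‖w‖) ^ 2) : ℂ) :=
      Complex.continuous_ofReal.comp (Real.continuous_exp.comp
        ((continuous_norm.pow 2).neg))
    exact continuous_const.mul (((continuous_pow (l + j + m)).mul
      (Complex.continuous_conj.pow (k + n + m))).mul hE)
  have h_bound : ∀ n : ℕ, ∀ᵐ w : ℂ, ‖F n w‖ ≤ bound n w := by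
    intro n
    filter_upwards with w
    have hnorm : ‖F n w‖ = ((Nat.factorial m : ℝ) / (Nat.factorial (n + m) : ℝ)) *
        (‖z‖ ^ n * (‖w‖ ^ (l + j + m) * ‖w‖ ^ (k + n + m) *
          Real.exp (-(‖w‖) ^ 2))) := by
      simp only [hF, norm_mul, norm_pow, norm_div, Complex.norm_natCast, RCLike.norm_conj,
        Complex.norm_real, Real.norm_eq_abs, Real.abs_exp, Complex.norm_natCast]
      ring
    rw [hnorm]
    simp only [hbound]
    have hpows : ‖w‖ ^ (l + j + m) * ‖w‖ ^ (k + n + m)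
        = ‖w‖ ^ L * ‖w‖ ^ n := by
      rw [← pow_add, ← pow_add]
      congr 1
      omega
    have hxpand : (‖w‖ ^ L * Real.exp (-(‖w‖) ^ 2)) *
        ((‖z‖ * ‖w‖) ^ n / (Nat.factorial n : ℝ))
        = (1 / (Nat.factorial n : ℝ)) * (‖z‖ ^ n * (‖w‖ ^ (l + j + m) *
            ‖w‖ ^ (k + n + m) * Real.exp (-(‖w‖) ^ 2))) := by
      rw [hpows, mul_pow]
      ring
    rw [hxpand]
    exact mul_le_mul_of_nonneg_right (fact_le n) (by positivity)
  have bound_summable : ∀ w : ℂ, Summable (fun n => bound n w) := fun w =>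
    (Real.summable_pow_div_factorial _).mul_left _
  have htsum : ∀ w : ℂ, ∑' n, bound n w
      = (‖w‖ ^ L * Real.exp (-(‖w‖) ^ 2)) *
        Real.exp (‖z‖ * ‖w‖) := by
    intro w
    simp only [hbound]
    rw [tsum_mul_left, exp_tsum_div]
  have bound_integrable : Integrable (fun w : ℂ => ∑' n, bound n w) := by
    simp only [htsum]
    have hgauss : Integrable (fun w : ℂ => Real.exp (-(1 / 2) * ‖w‖ ^ 2)) := by
      have hi := (GaussianFourier.integrable_cexp_neg_mul_sq_norm_add
        (V := ℂ) (b := (1 / 2 : ℂ)) (by norm_num) 0 0).norm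
      refine hi.congr (Filter.Eventually.of_forall fun v => ?_)
      simp only [Complex.norm_exp]
      congr 1
      simp [Complex.add_re, Complex.mul_re, Complex.ofReal_re, Complex.ofReal_im,
        ← Complex.ofReal_pow]
    refine Integrable.mono' ((hgauss.const_mul
      ((Nat.factorial L : ℝ) * Real.exp ((1 + ‖z‖) ^ 2 / 2)))) ?_ ?_
    · refine Continuous.aestronglyMeasurable ?_
      apply Continuous.mul
      · exact (Continuous.pow continuous_norm L).mul
          (Real.continuous_exp.comp (Continuous.neg (Continuous.pow continuous_norm 2)))
      · exact Real.continuous_exp.comp (continuous_const.mul continuous_norm)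
    · filter_upwards with w
      set t : ℝ := ‖w‖ with ht
      have ht0 : 0 ≤ t := norm_nonneg w
      have hnw : ‖w‖ = t := rfl
      have hx0 : 0 ≤ ‖z‖ := norm_nonneg _
      rw [Real.norm_eq_abs,
        _root_.abs_of_nonneg (show (0:ℝ) ≤ t ^ L * Real.exp (-t ^ 2) * Real.exp (‖z‖ * t)
          by positivity)]
      have h1 : t ^ L ≤ (Nat.factorial L : ℝ) * Real.exp t := by
        have := Real.pow_div_factorial_le_exp t ht0 L
        rw [div_le_iff₀ (by positivity)] at this
        linarith [this]
      calc t ^ L * Real.exp (-t ^ 2) * Real.exp (‖z‖ * t)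
          ≤ ((Nat.factorial L : ℝ) * Real.exp t) * Real.exp (-t ^ 2) * Real.exp (‖z‖ * t) := by
            gcongr
        _ = (Nat.factorial L : ℝ) * Real.exp (t + -t ^ 2 + ‖z‖ * t) := by
            rw [Real.exp_add, Real.exp_add]; ring
        _ ≤ (Nat.factorial L : ℝ) * Real.exp ((1 + ‖z‖) ^ 2 / 2 + -(1 / 2) * t ^ 2) := by
            have : t + -t ^ 2 + ‖z‖ * t ≤ (1 + ‖z‖) ^ 2 / 2 + -(1 / 2) * t ^ 2 := by
              nlinarith [sq_nonneg (1 + ‖z‖ - t)]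
            exact mul_le_mul_of_nonneg_left (Real.exp_le_exp.mpr this) (by positivity)
        _ = (Nat.factorial L : ℝ) * Real.exp ((1 + ‖z‖) ^ 2 / 2) *
              Real.exp (-(1 / 2) * ‖w‖ ^ 2) := by
            rw [Real.exp_add, hnw]; ring
  have hDCT := MeasureTheory.hasSum_integral_of_dominated_convergence bound h_meas h_bound
    (Filter.Eventually.of_forall bound_summable) bound_integrable
    (Filter.Eventually.of_forall h_lim)
  set T : ℂ := ((Nat.factorial m : ℂ) / (Nat.factorial (j + l - k + m) : ℂ) * z ^ (j + l - k)) *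
    ((Real.pi * (Nat.factorial (j + l + m)) : ℝ) : ℂ) with hT
  have hval : ∀ n : ℕ, (∫ w : ℂ, F n w) = if n = j + l - k then T else 0 := by
    intro n
    have : (∫ w : ℂ, F n w) = ((Nat.factorial m : ℂ) / (Nat.factorial (n + m) : ℂ) * z ^ n) *
        ∫ w : ℂ, w ^ (l + j + m) * ((starRingEnd ℂ) w) ^ (k + n + m) *
          (Real.exp (-(‖w‖) ^ 2) : ℂ) := by
      rw [← integral_const_mul]
    rw [this, gaussian_moment]
    by_cases hn : n = j + l - k
    · rw [if_pos (by omega), if_pos hn, hT, hn, show l + j + m = j + l + m from by omega]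
    · rw [if_neg (by omega), if_neg hn, mul_zero]
  have hsum1 : HasSum (fun n : ℕ => if n = j + l - k then T else 0) T := hasSum_ite_eq _ _
  have hint : (∫ w : ℂ, w ^ l * ((starRingEnd ℂ) w) ^ k * w ^ j * fockKernel m z w *
      ((‖w‖ : ℂ)) ^ (2 * m) * (Real.exp (-(‖w‖) ^ 2) : ℂ)) = T := by
    refine HasSum.unique ?_ hsum1
    exact (funext hval : (fun n => ∫ w : ℂ, F n w) = _) ▸ hDCT
  rw [hint, hT]
  have hπ : (Real.pi : ℂ) ≠ 0 := Complex.ofReal_ne_zero.2 Real.pi_ne_zero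
  have hm : (Nat.factorial m : ℂ) ≠ 0 := Nat.cast_ne_zero.2 (Nat.factorial_ne_zero m)
  have hd : (Nat.factorial (j + l - k + m) : ℂ) ≠ 0 :=
    Nat.cast_ne_zero.2 (Nat.factorial_ne_zero _)
  rw [Complex.ofReal_mul, Complex.ofReal_natCast]
  field_simp
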